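/- Let 1 → K → G →^π F → 1 be a split short exact sequence of groups with section s : F → G (a homomorphism with π ∘ s = id), and let S ⊆ G be a generating set of G. Then the kernel K is generated by the set { s(f) · x · s(f · π(x))⁻¹ : f ∈ F, x ∈ S }. -/
import Mathlib


/-- Schreier-type generation of the kernel of a split surjection: if
`π : G → F` is surjective with section `s` and `S` generates `G`, then the
elements `s(f)·x·s(f·π(x))⁻¹` for `f ∈ F`, `x ∈ S` generate `ker π`. -/
theorem kernel_generated_of_split {G F : Type*} [Group G] [Group F]
    (π : G →* F) (hπ : Function.Surjective π) (s : F →* G)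
    (hs : π.comp s = MonoidHom.id F) (S : Set G)
    (hS : Subgroup.closure S = ⊤) :
    Subgroup.closure
        {g : G | ∃ f : F, ∃ x ∈ S, g = s f * x * (s (f * π x))⁻¹} = π.ker := by
  have hsec : ∀ f : F, π (s f) = f := fun f => congrArg (·  f) hs
  apply le_antisymm
  · rw [Subgroup.closure_le]
    rintro g ⟨f, x, hx, rfl⟩
    simp [MonoidHom.mem_ker, hsec, mul_assoc]
  · intro g hg
    have hg' : π g = 1 := hg
    have key : ∀ g : G, ∀ f : F,
        s f * g * (s (f * π g))⁻¹ ∈ Subgroup.closure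
          {g : G | ∃ f : F, ∃ x ∈ S, g = s f * x * (s (f * π x))⁻¹} := by
      intro g
      have hgmem : g ∈ Subgroup.closure S := hS ▸ Subgroup.mem_top g
      induction hgmem using Subgroup.closure_induction with
      | mem x hx => exact fun f => Subgroup.subset_closure ⟨f, x, hx, rfl⟩
      | one => intro f; simpa using one_mem _
      | mul a b _ _ ha hb =>
        intro f
        have : s f * (a * b) * (s (f * π (a * b)))⁻¹ =
            (s f * a * (s (f * π a))⁻¹) *
              (s (f * π a) * b * (s ((f * π a) * π b))⁻¹) := by
          simp [mul_assoc]
        rw [this]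
        exact mul_mem (ha f) (hb (f * π a))
      | inv a _ ha =>
        intro f
        have : s f * a⁻¹ * (s (f * π a⁻¹))⁻¹ =
            (s (f * π a⁻¹) * a * (s ((f * π a⁻¹) * π a))⁻¹)⁻¹ := by
          simp [mul_assoc]
        rw [this]
        exact inv_mem (ha (f * π a⁻¹))
    have := key g 1
    simpa [hg'] using this
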